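/- In the equal-frequency case (f_i = 1/n) with distinct benefits E_1 > E_2 > ... > E_n > 0, the gap Δ_i(κ) = 1/h_{i+1}(κ) - 1/h_i(κ), where h_j(κ) = (1/n)(e^{κ E_j} - 1), is strictly decreasing in κ on (0, ∞). -/

import Mathlib

open Real Set

lemma aux_sinh_lt (x : ℝ) (hx : 0 < x) : Real.sinh x < x * Real.cosh x := by
  have hmono : StrictMonoOn (fun y => y * Real.cosh y - Real.sinh y) (Ici 0) := by
    apply strictMonoOn_of_deriv_pos (convex_Ici 0)
    · fun_prop
    · intro y hy
      rw [interior_Ici] at hy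
      have hd : HasDerivAt (fun y => y * Real.cosh y - Real.sinh y)
          (1 * Real.cosh y + y * Real.sinh y - Real.cosh y) y :=
        ((hasDerivAt_id y).mul (Real.hasDerivAt_cosh y)).sub (Real.hasDerivAt_sinh y)
      rw [hd.deriv]
      have hy0 : 0 < y := hy
      have := Real.sinh_pos_iff.mpr hy0
      nlinarith
  have := hmono (self_mem_Ici) (mem_Ici.mpr hx.le) hx
  simpa using this

lemma aux_mono : StrictMonoOn (fun u => Real.sinh u ^ 2 / u) (Ioi 0) := by
  apply strictMonoOn_of_deriv_pos (convex_Ioi 0)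
  · apply ContinuousOn.div (by fun_prop) continuousOn_id
    intro x hx; exact ne_of_gt hx
  · intro u hu
    rw [interior_Ioi] at hu
    have hne : u ≠ 0 := ne_of_gt hu
    have hd : HasDerivAt (fun u => Real.sinh u ^ 2 / u)
        (((2 : ℕ) * Real.sinh u ^ 1 * Real.cosh u * u - Real.sinh u ^ 2 * 1) / u ^ 2) u :=
      (((Real.hasDerivAt_sinh u).pow 2)).div (hasDerivAt_id u) hne
    rw [hd.deriv]
    have h1 : 0 < Real.sinh u := Real.sinh_pos_iff.mpr hu
    have h2 : Real.sinh u < u * Real.cosh u := aux_sinh_lt u hu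
    apply div_pos _ (by positivity)
    have hc : 0 < Real.cosh u := Real.cosh_pos u
    have hu0 : 0 < u := hu
    push_cast
    nlinarith [mul_lt_mul_of_pos_left h2 h1, mul_pos (mul_pos h1 hc) hu0]

lemma key_ineq (s t : ℝ) (hs : 0 < s) (hst : s < t) :
    t * Real.exp t * (Real.exp s - 1) ^ 2 < s * Real.exp s * (Real.exp t - 1) ^ 2 := by
  have ht : 0 < t := hs.trans hst
  have hes : Real.exp s - 1 = 2 * Real.exp (s / 2) * Real.sinh (s / 2) := by
    rw [Real.sinh_eq]
    have h1 : Real.exp (s/2) * Real.exp (s/2) = Real.exp s := by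
      rw [← Real.exp_add]; ring_nf
    have h2 : Real.exp (s/2) * Real.exp (-(s/2)) = 1 := by
      rw [← Real.exp_add]; simp
    nlinarith
  have het : Real.exp t - 1 = 2 * Real.exp (t / 2) * Real.sinh (t / 2) := by
    rw [Real.sinh_eq]
    have h1 : Real.exp (t/2) * Real.exp (t/2) = Real.exp t := by
      rw [← Real.exp_add]; ring_nf
    have h2 : Real.exp (t/2) * Real.exp (-(t/2)) = 1 := by
      rw [← Real.exp_add]; simp
    nlinarith
  have hm := aux_mono (mem_Ioi.mpr (by linarith : (0:ℝ) < s/2))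
      (mem_Ioi.mpr (by linarith : (0:ℝ) < t/2)) (by linarith)
  simp only at hm
  have h2 : Real.sinh (s/2) ^ 2 * t < Real.sinh (t/2) ^ 2 * s := by
    rw [div_lt_div_iff₀ (by linarith) (by linarith)] at hm
    nlinarith
  have hs2 : Real.exp s = Real.exp (s/2) ^ 2 := by
    rw [sq, ← Real.exp_add]; congr 1; ring
  have ht2 : Real.exp t = Real.exp (t/2) ^ 2 := by
    rw [sq, ← Real.exp_add]; congr 1; ring
  have hps : 0 < Real.exp (s/2) := Real.exp_pos _
  have hpt : 0 < Real.exp (t/2) := Real.exp_pos _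
  rw [hes, het, hs2, ht2]
  nlinarith [mul_lt_mul_of_pos_right h2 (by positivity : 0 < 4 * Real.exp (s/2)^2 * Real.exp (t/2)^2)]

theorem gap_strictAnti_equal_freq (n : ℕ) (hn : 2 ≤ n) (E : Fin n → ℝ)
    (hEanti : StrictAnti E) (hEpos : ∀ j, 0 < E j)
    (i : ℕ) (hi : i + 1 < n)
    (h : Fin n → ℝ → ℝ)
    (hh : ∀ j κ, h j κ = (1 / n) * (Real.exp (κ * E j) - 1))
    (Δ : ℝ → ℝ)
    (hΔ : ∀ κ, Δ κ = 1 / h ⟨i + 1, hi⟩ κ - 1 / h ⟨i, Nat.lt_of_succ_lt hi⟩ κ) :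
    StrictAntiOn Δ (Ioi 0) := by
  set a := E ⟨i, Nat.lt_of_succ_lt hi⟩ with ha
  set b := E ⟨i + 1, hi⟩ with hb
  have hapos : 0 < a := hEpos _
  have hbpos : 0 < b := hEpos _
  have hba : b < a := hEanti (by simp [Fin.mk_lt_mk])
  have hnpos : (0:ℝ) < n := by positivity
  have hΔ' : ∀ κ, Δ κ = n / (Real.exp (κ * b) - 1) - n / (Real.exp (κ * a) - 1) := by
    intro κ
    have key : ∀ x : ℝ, 1 / (1 / (n:ℝ) * x) = n / x := by
      intro x
      simp [one_div, mul_inv, inv_inv, div_eq_mul_inv, mul_comm]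
    rw [hΔ, hh, hh, ← ha, ← hb, key, key]
  have hΔeq : Δ = fun κ => n / (Real.exp (κ * b) - 1) - n / (Real.exp (κ * a) - 1) :=
    funext hΔ'
  rw [hΔeq]
  apply strictAntiOn_of_deriv_neg (convex_Ioi 0)
  · apply ContinuousOn.sub
    · apply ContinuousOn.div continuousOn_const (by fun_prop)
      intro x hx
      have hx0 : (0:ℝ) < x := hx
      have h1 : 1 < Real.exp (x * b) := Real.one_lt_exp_iff.mpr (mul_pos hx0 hbpos)
      linarith
    · apply ContinuousOn.div continuousOn_const (by fun_prop)
      intro x hx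
      have hx0 : (0:ℝ) < x := hx
      have h1 : 1 < Real.exp (x * a) := Real.one_lt_exp_iff.mpr (mul_pos hx0 hapos)
      linarith
  · intro κ hκ
    rw [interior_Ioi] at hκ
    have hκ0 : 0 < κ := hκ
    have hs : 0 < κ * b := mul_pos hκ0 hbpos
    have hst : κ * b < κ * a := by nlinarith
    have ht : 0 < κ * a := mul_pos hκ0 hapos
    have h1b : 1 < Real.exp (κ * b) := Real.one_lt_exp_iff.mpr hs
    have h1a : 1 < Real.exp (κ * a) := Real.one_lt_exp_iff.mpr ht
    have hdb : HasDerivAt (fun κ => Real.exp (κ * b) - 1) (Real.exp (κ * b) * b) κ := by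
      have := (Real.hasDerivAt_exp (κ * b)).comp κ (hasDerivAt_mul_const b)
      simpa using this.sub_const 1
    have hda : HasDerivAt (fun κ => Real.exp (κ * a) - 1) (Real.exp (κ * a) * a) κ := by
      have := (Real.hasDerivAt_exp (κ * a)).comp κ (hasDerivAt_mul_const a)
      simpa using this.sub_const 1
    have hneb : Real.exp (κ * b) - 1 ≠ 0 := by linarith
    have hnea : Real.exp (κ * a) - 1 ≠ 0 := by linarith
    have hDb : HasDerivAt (fun κ => (n:ℝ) / (Real.exp (κ * b) - 1))
        ((0 * (Real.exp (κ * b) - 1) - n * (Real.exp (κ * b) * b)) /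
          (Real.exp (κ * b) - 1) ^ 2) κ :=
      (hasDerivAt_const κ (n:ℝ)).div hdb hneb
    have hDa : HasDerivAt (fun κ => (n:ℝ) / (Real.exp (κ * a) - 1))
        ((0 * (Real.exp (κ * a) - 1) - n * (Real.exp (κ * a) * a)) /
          (Real.exp (κ * a) - 1) ^ 2) κ :=
      (hasDerivAt_const κ (n:ℝ)).div hda hnea
    have hD := hDb.sub hDa
    rw [show (fun κ => (n:ℝ) / (Real.exp (κ * b) - 1) - (n:ℝ) / (Real.exp (κ * a) - 1)) = ((fun κ => (n:ℝ) / (Real.exp (κ * b) - 1)) - fun κ => (n:ℝ) / (Real.exp (κ * a) - 1)) from rfl, hD.deriv]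
    have hkey := key_ineq (κ * b) (κ * a) hs hst
    have hpb : 0 < (Real.exp (κ * b) - 1) ^ 2 := by positivity
    have hpa : 0 < (Real.exp (κ * a) - 1) ^ 2 := by positivity
    rw [sub_neg, div_lt_div_iff₀ hpb hpa]
    nlinarith [mul_lt_mul_of_pos_left hkey (div_pos hnpos hκ0)]
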